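/- Let R be a ring in which every maximal right ideal is finitely generated. Then every cyclic artinian right R-module has finite length; consequently every finitely generated artinian right R-module has finite length. -/

import Mathlib

universe u

open MulOpposite Submodule LinearMap

section Aux
/-- The right-multiplication orbit map `r ↦ op r • x`, as an `Rᵐᵒᵖ`-linear map. -/
private def toSpanOp (R : Type u) [Ring R] (M : Type u) [AddCommGroup M] [Module Rᵐᵒᵖ M] (x : M) :
    R →ₗ[Rᵐᵒᵖ] M where
  toFun r := (op r) • x
  map_add' a b := by show op (a + b) • x = op a • x + op b • x; rw [op_add, add_smul]
  map_smul' a r := by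
    show op (a • r) • x = a • (op r • x)
    rw [← mul_smul]
    congr 1

variable {R : Type u} [Ring R]

private lemma toSpanOp_range (M : Type u) [AddCommGroup M] [Module Rᵐᵒᵖ M] (x : M) :
    LinearMap.range (toSpanOp R M x) = Submodule.span Rᵐᵒᵖ {x} := by
  apply le_antisymm
  · rintro _ ⟨r, rfl⟩
    exact Submodule.smul_mem _ _ (Submodule.mem_span_singleton_self x)
  · rw [Submodule.span_singleton_le_iff_mem]
    exact ⟨1, by show op (1 : R) • x = x; simp⟩

/-- `R` is finitely presented as a right module over itself. -/
private lemma fpR : Module.FinitePresentation Rᵐᵒᵖ R := by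
  have e : Rᵐᵒᵖ ≃ₗ[Rᵐᵒᵖ] R :=
    { toFun := unop, invFun := op,
      map_add' := fun a b => rfl,
      map_smul' := fun a b => rfl,
      left_inv := fun a => rfl, right_inv := fun a => rfl }
  exact Module.finitePresentation_of_surjective e.toLinearMap e.surjective
    (by rw [LinearEquiv.ker]; exact Submodule.fg_bot)

private lemma fp_of_simple (hmax : ∀ m : Submodule Rᵐᵒᵖ R, IsCoatom m → m.FG)
    (M : Type u) [AddCommGroup M] [Module Rᵐᵒᵖ M] [IsSimpleModule Rᵐᵒᵖ M] :
    Module.FinitePresentation Rᵐᵒᵖ M := by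
  have := IsSimpleModule.nontrivial Rᵐᵒᵖ M
  obtain ⟨x, hx⟩ := exists_ne (0 : M)
  have hsurj : Function.Surjective (toSpanOp R M x) := by
    rw [← LinearMap.range_eq_top, toSpanOp_range]
    rcases eq_bot_or_eq_top (Submodule.span Rᵐᵒᵖ {x}) with h | h
    · exact absurd ((Submodule.span_singleton_eq_bot).mp h) hx
    · exact h
  have hco : IsCoatom (LinearMap.ker (toSpanOp R M x)) := by
    rw [← isSimpleModule_iff_isCoatom]
    exact IsSimpleModule.congr ((toSpanOp R M x).quotKerEquivOfSurjective hsurj)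
  haveI := fpR (R := R)
  exact Module.finitePresentation_of_surjective (toSpanOp R M x) hsurj (hmax _ hco)

private lemma fp_of_fl (hmax : ∀ m : Submodule Rᵐᵒᵖ R, IsCoatom m → m.FG) :
    ∀ (M : Type u) [AddCommGroup M] [Module Rᵐᵒᵖ M],
      IsFiniteLength Rᵐᵒᵖ M → Module.FinitePresentation Rᵐᵒᵖ M := by
  intro M _ _ h
  induction h with
  | of_subsingleton =>
    rename_i M' _ _ _
    haveI := fpR (R := R)
    exact Module.finitePresentation_of_surjective (0 : R →ₗ[Rᵐᵒᵖ] M')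
      (fun y => ⟨0, Subsingleton.elim _ _⟩)
      (by rw [LinearMap.ker_zero]; exact Module.Finite.fg_top)
  | of_simple_quotient h ih =>
    rename_i M' _ _ N _
    haveI : Module.FinitePresentation Rᵐᵒᵖ (M' ⧸ N) := fp_of_simple hmax _
    haveI : Module.FinitePresentation Rᵐᵒᵖ ↥(LinearMap.ker N.mkQ) := by
      rw [Submodule.ker_mkQ]; exact ih
    exact Module.finitePresentation_of_ker N.mkQ N.mkQ_surjective

private lemma fg_of_fl (hmax : ∀ m : Submodule Rᵐᵒᵖ R, IsCoatom m → m.FG)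
    (I : Submodule Rᵐᵒᵖ R) (h : IsFiniteLength Rᵐᵒᵖ (R ⧸ I)) : I.FG := by
  haveI := fpR (R := R)
  haveI := fp_of_fl hmax _ h
  have := Module.FinitePresentation.fg_ker I.mkQ I.mkQ_surjective
  rwa [Submodule.ker_mkQ] at this

end Aux

section Main
variable {R : Type u} [Ring R]

private lemma cyclic_fl (hmax : ∀ m : Submodule Rᵐᵒᵖ R, IsCoatom m → m.FG)
    (I : Submodule Rᵐᵒᵖ R) (hart : IsArtinian Rᵐᵒᵖ (R ⧸ I)) :
    IsFiniteLength Rᵐᵒᵖ (R ⧸ I) := by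
  by_contra hbad
  set B : Set (Submodule Rᵐᵒᵖ R) :=
    {J | I ≤ J ∧ ¬ IsFiniteLength Rᵐᵒᵖ (R ⧸ J)} with hB
  have hchain : ∀ c ⊆ B, IsChain (· ≤ ·) c → ∀ y ∈ c, ∃ ub ∈ B, ∀ z ∈ c, z ≤ ub := by
    intro c hcB hc y hy
    refine ⟨sSup c, ⟨(hcB hy).1.trans (le_sSup hy), ?_⟩, fun z hz => le_sSup hz⟩
    intro hfl
    have hfg := fg_of_fl hmax _ hfl
    obtain ⟨j, hjc, hle⟩ := (CompleteLattice.isCompactElement_iff_le_of_directed_sSup_le _ _).mp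
      ((Submodule.fg_iff_compact _).mp hfg) c ⟨y, hy⟩ hc.directedOn le_rfl
    have hj : j = sSup c := le_antisymm (le_sSup hjc) hle
    exact (hcB hjc).2 (hj ▸ hfl)
  obtain ⟨J, hIJ, hJmax⟩ := zorn_le_nonempty₀ B hchain I ⟨le_rfl, hbad⟩
  have hJB : J ∈ B := hJmax.prop
  have hJI : I ≤ J := hIJ
  haveI hartJ : IsArtinian Rᵐᵒᵖ (R ⧸ J) :=
    isArtinian_of_linearEquiv (Submodule.quotientQuotientEquivQuotient I J hJI)
  have hne : J ≠ ⊤ := by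
    rintro rfl
    haveI : Subsingleton (R ⧸ (⊤ : Submodule Rᵐᵒᵖ R)) :=
      Submodule.Quotient.subsingleton_iff.mpr rfl
    exact hJB.2 IsFiniteLength.of_subsingleton
  haveI : Nontrivial (R ⧸ J) :=
    Submodule.Quotient.nontrivial_iff.mpr hne
  obtain ⟨S, hSmem, hSmin⟩ := IsArtinian.set_has_minimal
    {N : Submodule Rᵐᵒᵖ (R ⧸ J) | N ≠ ⊥} ⟨⊤, top_ne_bot⟩
  have hS : IsAtom S := ⟨hSmem, fun b hb => not_ne_iff.mp fun hbne => hSmin b hbne hb⟩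
  haveI hSsimple : IsSimpleModule Rᵐᵒᵖ ↥S := isSimpleModule_iff_isAtom.mpr hS
  set J' : Submodule Rᵐᵒᵖ R := S.comap J.mkQ with hJ'
  have hJJ' : J ≤ J' := by
    intro x hx
    show J.mkQ x ∈ S
    rw [Submodule.mkQ_apply, (Submodule.Quotient.mk_eq_zero J).mpr hx]
    exact S.zero_mem
  have hmapJ' : J'.map J.mkQ = S :=
    Submodule.map_comap_eq_self (by rw [Submodule.range_mkQ]; exact le_top)
  have hmapJ : J.map J.mkQ = ⊥ := by
    rw [eq_bot_iff]
    rintro _ ⟨x, hx, rfl⟩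
    simpa using (Submodule.Quotient.mk_eq_zero J).mpr hx
  have hlt : J < J' := by
    refine lt_of_le_of_ne hJJ' fun h => hS.1 ?_
    rw [← hmapJ', ← h, hmapJ]
  have hJ'fl : IsFiniteLength Rᵐᵒᵖ (R ⧸ J') := by
    by_contra hJ'bad
    exact absurd (le_antisymm (hJmax.2 ⟨hJI.trans hJJ', hJ'bad⟩ hJJ') hJJ') hlt.ne'
  refine hJB.2 (isFiniteLength_iff_isNoetherian_isArtinian.mpr ⟨?_, hartJ⟩)
  refine (isNoetherian_iff_submodule_quotient S).mpr ⟨inferInstance, ?_⟩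
  haveI : IsNoetherian Rᵐᵒᵖ (R ⧸ J') :=
    (isFiniteLength_iff_isNoetherian_isArtinian.mp hJ'fl).1
  have h2 : IsNoetherian Rᵐᵒᵖ ((R ⧸ J) ⧸ J'.map J.mkQ) :=
    isNoetherian_of_linearEquiv (Submodule.quotientQuotientEquivQuotient J J' hJJ').symm
  rwa [hmapJ'] at h2

end Main

/-- If every maximal right ideal of `R` is finitely generated, then every
cyclic artinian right `R`-module `R/I` has finite length; consequently every
finitely generated artinian right `R`-module has finite length.  Right
`R`-modules are modelled as modules over `Rᵐᵒᵖ`. -/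
theorem stmt10 (R : Type u) [Ring R]
    (hmax : ∀ m : Submodule Rᵐᵒᵖ R, IsCoatom m → m.FG) :
    (∀ I : Submodule Rᵐᵒᵖ R, IsArtinian Rᵐᵒᵖ (R ⧸ I) → IsFiniteLength Rᵐᵒᵖ (R ⧸ I)) ∧
    (∀ (M : Type u) [AddCommGroup M] [Module Rᵐᵒᵖ M],
      Module.Finite Rᵐᵒᵖ M → IsArtinian Rᵐᵒᵖ M → IsFiniteLength Rᵐᵒᵖ M) := by
  refine ⟨cyclic_fl hmax, ?_⟩
  intro M _ _ hfin hart
  haveI := hart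
  rw [isFiniteLength_iff_isNoetherian_isArtinian]
  refine ⟨?_, hart⟩
  haveI : ∀ x : M, IsNoetherian Rᵐᵒᵖ ↥(Submodule.span Rᵐᵒᵖ {x}) := by
    intro x
    have e := (toSpanOp R M x).quotKerEquivRange
    haveI : IsArtinian Rᵐᵒᵖ (R ⧸ LinearMap.ker (toSpanOp R M x)) :=
      isArtinian_of_linearEquiv e.symm
    have hfl := cyclic_fl hmax _ this
    haveI : IsNoetherian Rᵐᵒᵖ (R ⧸ LinearMap.ker (toSpanOp R M x)) :=
      (isFiniteLength_iff_isNoetherian_isArtinian.mp hfl).1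
    have h2 : IsNoetherian Rᵐᵒᵖ ↥(LinearMap.range (toSpanOp R M x)) :=
      isNoetherian_of_linearEquiv e
    rwa [toSpanOp_range] at h2
  obtain ⟨s, hs⟩ := hfin.fg_top
  have hsup : (⊤ : Submodule Rᵐᵒᵖ M) = ⨆ x : (s : Set M), Submodule.span Rᵐᵒᵖ {(x : M)} := by
    rw [← hs, Submodule.span_eq_iSup_of_singleton_spans, ← iSup_subtype'']
  rw [← isNoetherian_top_iff, hsup]
  haveI : Finite (s : Set M) := s.finite_toSet.to_subtype
  exact isNoetherian_iSup
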